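/- arXiv:1410.6384 — 3 statements merged into one kernel-verified Lean document; each statement's English description precedes it below -/
import Mathlib

section
/- Let 0 ≤ λ₁ ≤ 1 < λ₂ < a+1, p ∈ (0,1), a > 0, with p·λ₁ + (1-p)·λ₂ > 1. Then p·a/(a+1-λ₁) + (1-p)·a/(a+1-λ₂) > 1 for every a > λ₂ - 1. -/
theorem supercritical_mean_survives_all_a (lam₁ lam₂ a p : ℝ)
    (h1 : 0 ≤ lam₁) (h2 : lam₁ ≤ 1) (h3 : 1 < lam₂)
    (hp0 : 0 < p) (hp1 : p < 1)
    (hmean : 1 < p * lam₁ + (1 - p) * lam₂)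
    (ha : lam₂ - 1 < a) :
    1 < p * a / (a + 1 - lam₁) + (1 - p) * a / (a + 1 - lam₂) := by
  have hD₂ : 0 < a + 1 - lam₂ := by linarith
  have hD₁ : 0 < a + 1 - lam₁ := by linarith
  have ha0 : 0 < a := by linarith
  rw [div_add_div _ _ (ne_of_gt hD₁) (ne_of_gt hD₂), lt_div_iff₀ (mul_pos hD₁ hD₂)]
  nlinarith [mul_pos ha0 (sub_pos.mpr hmean),
    mul_nonneg (sub_nonneg.mpr h2) (le_of_lt (sub_pos.mpr h3))]
end

section
/- Let 0 ≤ λ₁ < 1 < λ₂ < a+1, p ∈ (0,1), a > 0, with p·λ₁ + (1-p)·λ₂ = 1. Then p·a/(a+1-λ₁) + (1-p)·a/(a+1-λ₂) > 1. -/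
theorem critical_mean_survives (lam₁ lam₂ a p : ℝ)
    (h1 : 0 ≤ lam₁) (h2 : lam₁ < 1) (h3 : 1 < lam₂) (h4 : lam₂ < a + 1)
    (ha : 0 < a) (hp0 : 0 < p) (hp1 : p < 1)
    (hmean : p * lam₁ + (1 - p) * lam₂ = 1) :
    1 < p * a / (a + 1 - lam₁) + (1 - p) * a / (a + 1 - lam₂) := by
  have hd1 : 0 < a + 1 - lam₁ := by linarith
  have hd2 : 0 < a + 1 - lam₂ := by linarith
  rw [div_add_div _ _ (ne_of_gt hd1) (ne_of_gt hd2), lt_div_iff₀ (by positivity)]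
  nlinarith [mul_pos hp0 (by linarith : (0:ℝ) < 1 - p), sq_nonneg (lam₁ - lam₂), mul_pos hd1 hd2, sq_nonneg (lam₂ - lam₁)]
end

section
/- Let a > 0, 0 < p < 1, 0 ≤ λ₁ < 1 < λ₂ < a+1 with E(Λ) := pλ₁+(1-p)λ₂ < 1, and let a_c = (1-λ₁)(1-λ₂)/(E(Λ)-1). Then for 0 < a ≤ λ₂ - 1 the survival criterion holds (E[exp((Λ-1)τ)] = +∞ > 1), and a_c > λ₂ - 1, so the set of a > 0 for which the process survives is exactly the interval (0, a_c). -/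
open MeasureTheory Set

theorem survival_interval_subcritical_mean (lam₁ lam₂ p : ℝ)
    (h1 : 0 ≤ lam₁) (h2 : lam₁ < 1) (h3 : 1 < lam₂)
    (hp0 : 0 < p) (hp1 : p < 1)
    (hmean : p * lam₁ + (1 - p) * lam₂ < 1) :
    lam₂ - 1 <
        (1 - lam₁) * (1 - lam₂) / (p * lam₁ + (1 - p) * lam₂ - 1) ∧
      {a : ℝ | 0 < a ∧
          1 < (if lam₂ - 1 < a then
                ENNReal.ofReal (p * a / (a + 1 - lam₁) + (1 - p) * a / (a + 1 - lam₂))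
              else ⊤)} =
        Ioo 0 ((1 - lam₁) * (1 - lam₂) / (p * lam₁ + (1 - p) * lam₂ - 1)) := by
  have hm : p * lam₁ + (1 - p) * lam₂ - 1 < 0 := by linarith
  have hac : lam₂ - 1 <
      (1 - lam₁) * (1 - lam₂) / (p * lam₁ + (1 - p) * lam₂ - 1) := by
    rw [lt_div_iff_of_neg hm]
    nlinarith [mul_pos (sub_pos.mpr h3) (mul_pos (by linarith : (0:ℝ) < 1 - p)
      (by linarith : (0:ℝ) < lam₂ - lam₁))]
  refine ⟨hac, ?_⟩
  ext a
  simp only [mem_setOf_eq, mem_Ioo]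
  refine and_congr_right fun ha => ?_
  by_cases hcase : lam₂ - 1 < a
  · rw [if_pos hcase, ENNReal.one_lt_ofReal]
    have hA : (0:ℝ) < a + 1 - lam₁ := by linarith
    have hB : (0:ℝ) < a + 1 - lam₂ := by linarith
    rw [div_add_div _ _ hA.ne' hB.ne', lt_div_iff₀ (mul_pos hA hB),
      lt_div_iff_of_neg hm]
    constructor <;> intro h <;> nlinarith [h]
  · rw [if_neg hcase]
    simp only [ENNReal.one_lt_top, true_iff]
    exact lt_of_le_of_lt (not_lt.mp hcase) hac
end
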